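/- For every integer n ≥ 3 and with m_n equal to either (3/2)n(n+3) or (n/2)(3n² + 14n + 9), the following chain of strict inequalities holds: MS(n) > C(n, m_n) > S(n,2) > AT(n,2), where MS(n) = 4^{n+1}/ω_n^{1/n}, C(n,m) = max{ (1/n)(m ω_m / ((n+m) ω_{n+m}))^{1/n}, 1/(n ω_n^{1/n}) }, S(n,2) = π^{-1/2} (n-1)/(n(n-2)) · (Γ(n)/Γ(n/2))^{1/n}, and AT(n,2) = π^{-1/2} (n(n-2))^{-1/2} (Γ(n)/Γ(n/2))^{1/n}. -/

import Mathlib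

open Real

/-- The Lebesgue volume of the unit ball in `ℝ^k`. -/
noncomputable def ballVol (k : ℕ) : ℝ := Real.pi ^ ((k : ℝ) / 2) / Real.Gamma ((k : ℝ) / 2 + 1)

/-- The Michael–Simon constant. -/
noncomputable def MS (n : ℕ) : ℝ := 4 ^ (n + 1) / ballVol n ^ ((1 : ℝ) / n)

/-- The Brendle constant. -/
noncomputable def Cnm (n m : ℕ) : ℝ :=
  max ((1 / (n : ℝ)) * ((m : ℝ) * ballVol m / (((n : ℝ) + m) * ballVol (n + m))) ^ ((1 : ℝ) / n))
    (1 / ((n : ℝ) * ballVol n ^ ((1 : ℝ) / n)))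

/-- The minimal-submanifold Sobolev constant at `p = 2`. -/
noncomputable def S2 (n : ℕ) : ℝ :=
  Real.pi ^ (-(1 : ℝ) / 2) * ((n : ℝ) - 1) / ((n : ℝ) * ((n : ℝ) - 2)) *
    (Real.Gamma (n : ℝ) / Real.Gamma ((n : ℝ) / 2)) ^ ((1 : ℝ) / n)

/-- The Aubin–Talenti constant at `p = 2`. -/
noncomputable def AT2 (n : ℕ) : ℝ :=
  Real.pi ^ (-(1 : ℝ) / 2) * ((n : ℝ) * ((n : ℝ) - 2)) ^ (-(1 : ℝ) / 2) *
    (Real.Gamma (n : ℝ) / Real.Gamma ((n : ℝ) / 2)) ^ ((1 : ℝ) / n)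

lemma half_up' {x : ℝ} (hx : 0 < x) : Gamma (x + 1/2) ≤ Gamma x * Real.sqrt x := by
  have h1 : (0:ℝ) < Gamma x := Gamma_pos_of_pos hx
  have h2 : (0:ℝ) < Gamma (x+1) := Gamma_pos_of_pos (by linarith)
  have hc := Real.convexOn_log_Gamma.2 (Set.mem_Ioi.mpr hx) (Set.mem_Ioi.mpr (by linarith : (0:ℝ) < x+1))
    (by norm_num : (0:ℝ) ≤ 1/2) (by norm_num : (0:ℝ) ≤ 1/2) (by norm_num)
  simp only [smul_eq_mul, Function.comp_apply] at hc
  have he : (1/2 : ℝ) * x + (1/2:ℝ) * (x+1) = x + 1/2 := by ring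
  rw [he] at hc
  have hpos : (0:ℝ) < Gamma (x + 1/2) := Gamma_pos_of_pos (by linarith)
  have := Real.exp_le_exp.mpr hc
  rw [Real.exp_log hpos] at this
  have hrw : Real.exp (1/2 * Real.log (Gamma x) + 1/2 * Real.log (Gamma (x+1)))
      = Real.sqrt (Gamma x) * Real.sqrt (Gamma (x+1)) := by
    rw [Real.exp_add]
    rw [show (1/2:ℝ) * Real.log (Gamma x) = Real.log (Gamma x) * (1/2) by ring,
        show (1/2:ℝ) * Real.log (Gamma (x+1)) = Real.log (Gamma (x+1)) * (1/2) by ring,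
        ← Real.rpow_def_of_pos h1, ← Real.rpow_def_of_pos h2,
        ← Real.sqrt_eq_rpow, ← Real.sqrt_eq_rpow]
  rw [hrw, Real.Gamma_add_one hx.ne'] at this
  calc Gamma (x + 1/2) ≤ Real.sqrt (Gamma x) * Real.sqrt (x * Gamma x) := this
    _ = Gamma x * Real.sqrt x := by
        rw [Real.sqrt_mul' _ h1.le]; rw [show √(Gamma x) * (√x * √(Gamma x)) = (√(Gamma x) * √(Gamma x)) * √x by ring, Real.mul_self_sqrt h1.le]

lemma half_lo' {x : ℝ} (hx : 1/2 < x) : Gamma x * Real.sqrt (x - 1/2) ≤ Gamma (x + 1/2) := by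
  set y := x - 1/2 with hy
  have hy0 : 0 < y := by simp [hy]; linarith
  have h1 : Gamma x ≤ Gamma y * Real.sqrt y := by
    have := half_up' hy0
    rwa [show y + 1/2 = x by rw [hy]; ring] at this
  have h2 : Gamma (x + 1/2) = y * Gamma y := by
    rw [show x + 1/2 = y + 1 by rw [hy]; ring, Real.Gamma_add_one hy0.ne']
  rw [h2]
  calc Gamma x * Real.sqrt y ≤ (Gamma y * Real.sqrt y) * Real.sqrt y := by
        apply mul_le_mul_of_nonneg_right h1 (Real.sqrt_nonneg _)
    _ = y * Gamma y := by
        rw [mul_assoc, Real.mul_self_sqrt hy0.le]; ring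

lemma steps_up' {x : ℝ} (hx : 0 < x) (k : ℕ) :
    Gamma (x + k/2) ≤ Gamma x * Real.sqrt (x + k/2) ^ k := by
  induction k with
  | zero => simp
  | succ k ih =>
    have hxk : 0 < x + k/2 := by positivity
    have h1 : Gamma (x + (k+1:ℕ)/2) ≤ Gamma (x + k/2) * Real.sqrt (x + k/2) := by
      have := half_up' hxk
      rwa [show x + k/2 + 1/2 = x + (k+1:ℕ)/2 by push_cast; ring] at this
    calc Gamma (x + (k+1:ℕ)/2) ≤ Gamma (x + k/2) * Real.sqrt (x + k/2) := h1
      _ ≤ (Gamma x * Real.sqrt (x + k/2) ^ k) * Real.sqrt (x + k/2) :=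
          mul_le_mul_of_nonneg_right ih (Real.sqrt_nonneg _)
      _ ≤ (Gamma x * Real.sqrt (x + (k+1:ℕ)/2) ^ k) * Real.sqrt (x + (k+1:ℕ)/2) := by
          have hmono : Real.sqrt (x + k/2) ≤ Real.sqrt (x + (k+1:ℕ)/2) := by
            apply Real.sqrt_le_sqrt; push_cast; linarith
          have h0 : (0:ℝ) ≤ Real.sqrt (x + k/2) := Real.sqrt_nonneg _
          have hG : (0:ℝ) ≤ Gamma x := (Gamma_pos_of_pos hx).le
          apply mul_le_mul (mul_le_mul_of_nonneg_left (pow_le_pow_left₀ h0 hmono k) hG) hmono h0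
          positivity
      _ = Gamma x * Real.sqrt (x + (k+1:ℕ)/2) ^ (k+1) := by ring

lemma steps_lo' {x : ℝ} (hx : 1 ≤ x) (k : ℕ) :
    Gamma x * Real.sqrt (x - 1/2) ^ k ≤ Gamma (x + k/2) := by
  induction k with
  | zero => simp
  | succ k ih =>
    have hk2 : (0:ℝ) ≤ (k:ℝ)/2 := by positivity
    have hxk : 1/2 < x + k/2 := by linarith
    have h1 : Gamma (x + k/2) * Real.sqrt (x + k/2 - 1/2) ≤ Gamma (x + (k+1:ℕ)/2) := by
      have := half_lo' hxk
      rwa [show x + k/2 + 1/2 = x + (k+1:ℕ)/2 by push_cast; ring] at this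
    have hmono : Real.sqrt (x - 1/2) ≤ Real.sqrt (x + k/2 - 1/2) := by
      apply Real.sqrt_le_sqrt; linarith
    have hG : (0:ℝ) < Gamma (x + k/2) := Gamma_pos_of_pos (by linarith)
    calc Gamma x * Real.sqrt (x - 1/2) ^ (k+1)
        = (Gamma x * Real.sqrt (x - 1/2) ^ k) * Real.sqrt (x - 1/2) := by ring
      _ ≤ Gamma (x + k/2) * Real.sqrt (x + k/2 - 1/2) := by
          apply mul_le_mul ih hmono (Real.sqrt_nonneg _) hG.le
      _ ≤ Gamma (x + (k+1:ℕ)/2) := h1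

lemma gamma_half_pos (k : ℕ) : 0 < Gamma ((k:ℝ)/2 + 1) :=
  Gamma_pos_of_pos (by positivity)

lemma ballVol_pos (k : ℕ) : 0 < ballVol k := by
  unfold ballVol
  exact div_pos (rpow_pos_of_pos pi_pos _) (gamma_half_pos k)

lemma one_le_Gamma_half {n : ℕ} (h : 2 ≤ n) : 1 ≤ Gamma ((n:ℝ)/2 + 1) := by
  have h1 := steps_lo' (x := 2) (by norm_num) (n - 2)
  have hc : ((n - 2 : ℕ) : ℝ) = (n:ℝ) - 2 := by
    push_cast [Nat.cast_sub h]; ring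
  rw [hc, Real.Gamma_two, one_mul] at h1
  have he : (2:ℝ) + ((n:ℝ) - 2)/2 = (n:ℝ)/2 + 1 := by ring
  rw [he] at h1
  refine le_trans ?_ h1
  have : (1:ℝ) ≤ Real.sqrt (2 - 1/2) := by
    rw [Real.le_sqrt (by norm_num) (by norm_num)]; norm_num
  calc (1:ℝ) = 1 ^ (n-2) := (one_pow _).symm
    _ ≤ Real.sqrt (2 - 1/2) ^ (n-2) := pow_le_pow_left₀ (by norm_num) this _

/-- The key representation `T = π^(-n/2) * U`. -/
noncomputable def Uq (n m : ℕ) : ℝ :=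
  (m:ℝ) * Gamma (((n:ℝ) + (m:ℝ))/2 + 1) / (((n:ℝ) + (m:ℝ)) * Gamma ((m:ℝ)/2 + 1))

lemma Uq_pos {n m : ℕ} (hn : 1 ≤ n) (hm : 1 ≤ m) : 0 < Uq n m := by
  unfold Uq
  have h1 : (0:ℝ) < m := by exact_mod_cast hm
  have h2 : (0:ℝ) < (n:ℝ) + m := by
    have : (0:ℝ) < n := by exact_mod_cast hn
    linarith
  have h3 : 0 < Gamma (((n:ℝ) + (m:ℝ))/2 + 1) := Gamma_pos_of_pos (by positivity)
  have h4 : 0 < Gamma ((m:ℝ)/2 + 1) := gamma_half_pos m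
  positivity

lemma T_eq (n m : ℕ) (hn : 1 ≤ n) (hm : 1 ≤ m) :
    (m : ℝ) * ballVol m / (((n : ℝ) + m) * ballVol (n + m))
      = π ^ (-((n:ℝ))/2) * Uq n m := by
  have h1 : (0:ℝ) < m := by exact_mod_cast hm
  have h2 : (0:ℝ) < (n:ℝ) + m := by
    have : (0:ℝ) < n := by exact_mod_cast hn
    linarith
  have h3 : 0 < Gamma (((n:ℝ) + (m:ℝ))/2 + 1) := Gamma_pos_of_pos (by positivity)
  have h4 : 0 < Gamma ((m:ℝ)/2 + 1) := gamma_half_pos m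
  have hcast : ((n + m : ℕ) : ℝ) = (n:ℝ) + m := by push_cast; ring
  have hpi1 : (0:ℝ) < π ^ ((m:ℝ)/2) := rpow_pos_of_pos pi_pos _
  have hpi2 : (0:ℝ) < π ^ (((n:ℝ)+(m:ℝ))/2) := rpow_pos_of_pos pi_pos _
  have hpi3 : (0:ℝ) < π ^ (-((n:ℝ))/2) := rpow_pos_of_pos pi_pos _
  have hsplit : π ^ ((m:ℝ)/2) = π ^ (-((n:ℝ))/2) * π ^ (((n:ℝ)+(m:ℝ))/2) := by
    rw [← Real.rpow_add pi_pos]; congr 1; ring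
  unfold ballVol Uq
  rw [hcast, hsplit]
  field_simp

lemma sqrt_pi_gt : (1.77:ℝ) ≤ Real.sqrt π := by
  rw [Real.le_sqrt (by norm_num) (by positivity)]
  nlinarith [pi_gt_d6]

lemma pow_frac_le_eight {n : ℕ} (hn : 3 ≤ n) : (((n:ℝ) - 1)/((n:ℝ) - 2)) ^ n ≤ 8 := by
  rcases eq_or_lt_of_le hn with h | h
  · subst h; norm_num
  · have hn4 : 4 ≤ n := h
    have hN : (4:ℝ) ≤ n := by exact_mod_cast hn4
    have hd : (0:ℝ) < (n:ℝ) - 2 := by linarith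
    have hc : ((n:ℝ) - 1)/((n:ℝ) - 2) = 1 + 1/((n:ℝ) - 2) := by
      field_simp; ring
    have h1 : ((n:ℝ) - 1)/((n:ℝ) - 2) ≤ Real.exp (1/((n:ℝ) - 2)) := by
      rw [hc]
      have := Real.add_one_le_exp (1/((n:ℝ) - 2))
      linarith
    have h2 : (((n:ℝ) - 1)/((n:ℝ) - 2)) ^ n ≤ Real.exp (1/((n:ℝ) - 2)) ^ n := by
      apply pow_le_pow_left₀ ?_ h1
      rw [hc]; positivity
    have h3 : Real.exp (1/((n:ℝ) - 2)) ^ n = Real.exp ((n:ℝ) * (1/((n:ℝ)-2))) := by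
      rw [Real.exp_nat_mul]
    have h4 : (n:ℝ) * (1/((n:ℝ)-2)) ≤ 2 := by
      rw [mul_one_div, div_le_iff₀ hd]; linarith
    have h5 : Real.exp ((n:ℝ) * (1/((n:ℝ)-2))) ≤ Real.exp 2 := Real.exp_le_exp.mpr h4
    have h6 : Real.exp 2 ≤ 8 := by
      have he := Real.exp_one_lt_d9
      have h7 : Real.exp 2 = Real.exp 1 * Real.exp 1 := by
        rw [← Real.exp_add]; norm_num
      nlinarith [Real.exp_pos 1]
    calc (((n:ℝ) - 1)/((n:ℝ) - 2)) ^ n ≤ Real.exp (1/((n:ℝ) - 2)) ^ n := h2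
      _ = Real.exp ((n:ℝ) * (1/((n:ℝ)-2))) := h3
      _ ≤ Real.exp 2 := h5
      _ ≤ 8 := h6

lemma c_gt_s_of_key {n m : ℕ} (hn : 3 ≤ n) (hm : 1 ≤ m)
    (key : (((n:ℝ) - 1)/((n:ℝ) - 2)) ^ n * 2 ^ (n - 1) * Gamma (((n:ℝ) + 1)/2)
      < Real.sqrt π * Uq n m) :
    Cnm n m > S2 n := by
  set N := (n:ℝ) with hNdef
  have hN3 : (3:ℝ) ≤ N := by rw [hNdef]; exact_mod_cast hn
  have hNpos : (0:ℝ) < N := by linarith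
  have hn0 : N ≠ 0 := hNpos.ne'
  have hc : (0:ℝ) < (N - 1)/(N - 2) := by
    apply div_pos <;> linarith
  have hsπ : (0:ℝ) < Real.sqrt π := Real.sqrt_pos.mpr pi_pos
  have hG2 : (0:ℝ) < Gamma (N/2) := Gamma_pos_of_pos (by linarith)
  have hGN : (0:ℝ) < Gamma N := Gamma_pos_of_pos (by linarith)
  have hG1 : (0:ℝ) < Gamma ((N+1)/2) := Gamma_pos_of_pos (by linarith)
  have hUq : (0:ℝ) < Uq n m := Uq_pos (by omega) hm
  -- duplication
  have hdup := Real.Gamma_mul_Gamma_add_half (N/2)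
  rw [show N/2 + 1/2 = (N+1)/2 by ring, show 2*(N/2) = N by ring] at hdup
  have h2exp : (2:ℝ) ^ ((1:ℝ) - N) = ((2:ℝ) ^ (n - 1 : ℕ))⁻¹ := by
    rw [← Real.rpow_natCast 2 (n-1), ← Real.rpow_neg (by norm_num : (0:ℝ) ≤ 2)]
    congr 1
    push_cast [Nat.cast_sub (show 1 ≤ n by omega)]
    ring
  rw [h2exp] at hdup
  have hpow2 : (0:ℝ) < (2:ℝ) ^ (n - 1 : ℕ) := by positivity
  have hG : Gamma N / Gamma (N/2) = Gamma ((N+1)/2) * (2:ℝ) ^ (n - 1 : ℕ) / Real.sqrt π := by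
    rw [div_eq_div_iff hG2.ne' hsπ.ne']
    field_simp at hdup
    nlinarith [hdup]
  -- from key to hUG
  have hUG : ((N - 1)/(N - 2)) ^ n * (Gamma N / Gamma (N/2)) < Uq n m := by
    rw [hG]
    rw [mul_div_assoc', div_lt_iff₀ hsπ]
    calc ((N - 1)/(N - 2)) ^ n * (Gamma ((N+1)/2) * (2:ℝ) ^ (n - 1 : ℕ))
        = ((N - 1)/(N - 2)) ^ n * 2 ^ (n - 1 : ℕ) * Gamma ((N+1)/2) := by ring
      _ < Real.sqrt π * Uq n m := key
      _ = Uq n m * Real.sqrt π := mul_comm _ _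
  -- take n-th roots
  have hGq : (0:ℝ) < Gamma N / Gamma (N/2) := div_pos hGN hG2
  have hinv : (0:ℝ) < (1:ℝ)/N := by positivity
  have hrpow : (((N - 1)/(N - 2)) ^ n * (Gamma N / Gamma (N/2))) ^ ((1:ℝ)/n)
      < Uq n m ^ ((1:ℝ)/n) :=
    Real.rpow_lt_rpow (by positivity) hUG hinv
  have hsplit : (((N - 1)/(N - 2)) ^ n * (Gamma N / Gamma (N/2))) ^ ((1:ℝ)/n)
      = ((N - 1)/(N - 2)) * (Gamma N / Gamma (N/2)) ^ ((1:ℝ)/n) := by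
    rw [Real.mul_rpow (by positivity) hGq.le]
    congr 1
    rw [← Real.rpow_natCast ((N - 1)/(N - 2)) n, ← Real.rpow_mul hc.le]
    rw [mul_one_div, div_self (by exact_mod_cast (show (n:ℝ) ≠ 0 from hn0)), Real.rpow_one]
  rw [hsplit] at hrpow
  -- rewrite the Cnm branch
  have hpinn : (0:ℝ) < π ^ (-(1:ℝ)/2) := Real.rpow_pos_of_pos pi_pos _
  have hTr : ((m : ℝ) * ballVol m / (((n : ℝ) + m) * ballVol (n + m))) ^ ((1:ℝ)/n)
      = π ^ (-(1:ℝ)/2) * Uq n m ^ ((1:ℝ)/n) := by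
    rw [T_eq n m (by omega) hm, Real.mul_rpow (Real.rpow_nonneg pi_pos.le _) hUq.le]
    congr 1
    rw [← Real.rpow_mul pi_pos.le]
    congr 1
    field_simp
  have hS2eq : S2 n = (1/N) * (π ^ (-(1:ℝ)/2) * (((N - 1)/(N - 2)) *
      (Gamma N / Gamma (N/2)) ^ ((1:ℝ)/n))) := by
    unfold S2
    rw [← hNdef]
    field_simp
  apply lt_of_lt_of_le _ (le_max_left _ _)
  rw [hTr, hS2eq]
  have hstep : π ^ (-(1:ℝ)/2) * (((N - 1)/(N - 2)) * (Gamma N / Gamma (N/2)) ^ ((1:ℝ)/n))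
      < π ^ (-(1:ℝ)/2) * Uq n m ^ ((1:ℝ)/n) :=
    mul_lt_mul_of_pos_left hrpow hpinn
  have h1N : (0:ℝ) < 1/N := hinv
  calc (1/N) * (π ^ (-(1:ℝ)/2) * (((N - 1)/(N - 2)) * (Gamma N / Gamma (N/2)) ^ ((1:ℝ)/n)))
      < (1/N) * (π ^ (-(1:ℝ)/2) * Uq n m ^ ((1:ℝ)/n)) := mul_lt_mul_of_pos_left hstep h1N
    _ = 1/(n:ℝ) * (π ^ (-(1:ℝ)/2) * Uq n m ^ ((1:ℝ)/n)) := by rw [hNdef]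

set_option maxHeartbeats 1000000 in
lemma key2_general {n m : ℕ} (hn4 : 4 ≤ n) (hm : 3*n*(n+3) ≤ 2*m) :
    (((n:ℝ) - 1)/((n:ℝ) - 2)) ^ n * 2 ^ (n - 1) * Gamma (((n:ℝ) + 1)/2)
      < Real.sqrt π * Uq n m := by
  set N := (n:ℝ) with hNdef
  have hN4 : (4:ℝ) ≤ N := by rw [hNdef]; exact_mod_cast hn4
  have hmn : n ≤ m := by nlinarith
  have hmR : 3*N*(N+3) ≤ 2*(m:ℝ) := by
    rw [hNdef]; exact_mod_cast hm
  have hmpos : (0:ℝ) < m := by nlinarith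
  have hNm : (0:ℝ) < N + m := by linarith
  set x : ℝ := (m:ℝ)/2 + 1 with hxdef
  have hx1 : (1:ℝ) ≤ x := by rw [hxdef]; nlinarith
  have hΓx : (0:ℝ) < Gamma x := Gamma_pos_of_pos (by linarith)
  have hsl := steps_lo' hx1 n
  rw [show x + (n:ℝ)/2 = (N + (m:ℝ))/2 + 1 by rw [hxdef, hNdef]; ring] at hsl
  have hΓnm : (0:ℝ) < Gamma ((N + (m:ℝ))/2 + 1) := Gamma_pos_of_pos (by positivity)
  -- lower bound for Uq
  have hU_lb : (1/2:ℝ) * Real.sqrt (x - 1/2) ^ n ≤ Uq n m := by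
    have hm2 : (1/2:ℝ) ≤ (m:ℝ)/(N + m) := by
      rw [le_div_iff₀ hNm]
      have : N ≤ (m:ℝ) := by rw [hNdef]; exact_mod_cast hmn
      linarith
    have hdivΓ : Real.sqrt (x - 1/2) ^ n ≤ Gamma ((N + (m:ℝ))/2 + 1) / Gamma x := by
      rw [le_div_iff₀ hΓx]
      calc Real.sqrt (x - 1/2) ^ n * Gamma x = Gamma x * Real.sqrt (x - 1/2) ^ n := by ring
        _ ≤ Gamma ((N + (m:ℝ))/2 + 1) := hsl
    calc (1/2:ℝ) * Real.sqrt (x - 1/2) ^ n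
        ≤ ((m:ℝ)/(N + m)) * Real.sqrt (x - 1/2) ^ n :=
          mul_le_mul_of_nonneg_right hm2 (by positivity)
      _ ≤ ((m:ℝ)/(N + m)) * (Gamma ((N + (m:ℝ))/2 + 1) / Gamma x) := by
          apply mul_le_mul_of_nonneg_left hdivΓ (by positivity)
      _ = Uq n m := by unfold Uq; rw [← hNdef, div_mul_div_comm]
  -- numbers
  set w : ℝ := (N+1)/2 with hwdef
  set q : ℝ := 3*N*(N+3)/(8*(N+1)) with hqdef
  have hwpos : (0:ℝ) < w := by rw [hwdef]; linarith
  have hqpos : (0:ℝ) < q := by rw [hqdef]; positivity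
  have hM : 3*N*(N+3)/4 = 4 * (q * w) := by
    rw [hqdef, hwdef]; field_simp; ring
  have hsM : Real.sqrt (3*N*(N+3)/4) = 2 * (Real.sqrt q * Real.sqrt w) := by
    rw [hM, Real.sqrt_mul (by norm_num : (0:ℝ) ≤ 4), Real.sqrt_mul hqpos.le,
      show Real.sqrt (4:ℝ) = 2 by
        rw [show (4:ℝ) = 2^2 by norm_num, Real.sqrt_sq (by norm_num : (0:ℝ) ≤ 2)]]
  -- sqrt(x-1/2) ≥ sqrt(3N(N+3)/4)
  have hxM : 3*N*(N+3)/4 ≤ x - 1/2 := by rw [hxdef]; nlinarith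
  have hsx : Real.sqrt (3*N*(N+3)/4) ≤ Real.sqrt (x - 1/2) := Real.sqrt_le_sqrt hxM
  -- Gamma w upper bound
  have hΓw : Gamma w ≤ Real.sqrt w ^ (n - 1) := by
    have h := steps_up' (x := 1) one_pos (n - 1)
    have hc1 : ((n - 1 : ℕ) : ℝ) = N - 1 := by
      rw [hNdef]; push_cast [Nat.cast_sub (show 1 ≤ n by omega)]; ring
    rw [hc1, Real.Gamma_one, one_mul, show (1:ℝ) + (N-1)/2 = w by rw [hwdef]; ring] at h
    exact h
  have hΓwpos : (0:ℝ) < Gamma w := Gamma_pos_of_pos hwpos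
  -- core numeric inequality
  have hsq : (1.44:ℝ) ≤ Real.sqrt q := by
    rw [Real.le_sqrt (by norm_num) hqpos.le]
    rw [hqdef, le_div_iff₀ (by linarith : (0:ℝ) < 8*(N+1))]
    nlinarith
  have hsw : (1.58:ℝ) ≤ Real.sqrt w := by
    rw [Real.le_sqrt (by norm_num) hwpos.le]
    rw [hwdef]; nlinarith
  have hsqn : (1.44:ℝ)^4 ≤ Real.sqrt q ^ n := by
    calc (1.44:ℝ)^4 ≤ (1.44:ℝ)^n := pow_le_pow_right₀ (by norm_num) hn4
      _ ≤ Real.sqrt q ^ n := pow_le_pow_left₀ (by norm_num) hsq n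
  have hcore : (8:ℝ) < Real.sqrt q ^ n * Real.sqrt w * Real.sqrt π := by
    have e1 : (1.44:ℝ)^4 * 1.58 * 1.77 ≤ (Real.sqrt q ^ n * Real.sqrt w) * Real.sqrt π := by
      apply mul_le_mul (mul_le_mul hsqn hsw (by norm_num) (by positivity)) sqrt_pi_gt
        (by norm_num) (by positivity)
    have h8 : (8:ℝ) < 1.44^4 * 1.58 * 1.77 := by norm_num
    linarith
  -- assemble
  have hc8 : (((N:ℝ) - 1)/(N - 2)) ^ n ≤ 8 := by
    have := pow_frac_le_eight (n := n) (by omega)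
    rw [← hNdef] at this; exact this
  have hpow2 : (0:ℝ) < (2:ℝ) ^ (n - 1 : ℕ) := by positivity
  have hswn : (0:ℝ) < Real.sqrt w ^ (n-1) := by positivity
  have hn1 : n = (n - 1) + 1 := by omega
  have hexp2 : (2:ℝ)^n = 2^(n-1) * 2 := by conv_lhs => rw [hn1, pow_succ]
  have hexpw : Real.sqrt w ^ n = Real.sqrt w ^ (n-1) * Real.sqrt w := by
    conv_lhs => rw [hn1, pow_succ]
  calc (((N:ℝ) - 1)/(N - 2)) ^ n * 2 ^ (n - 1) * Gamma w
      ≤ 8 * 2^(n-1) * (Real.sqrt w ^ (n-1)) := by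
        apply mul_le_mul (mul_le_mul hc8 le_rfl (by positivity) (by norm_num)) hΓw
          hΓwpos.le (by positivity)
    _ = (2^(n-1) * Real.sqrt w ^ (n-1)) * 8 := by ring
    _ < (2^(n-1) * Real.sqrt w ^ (n-1)) * (Real.sqrt q ^ n * Real.sqrt w * Real.sqrt π) := by
        apply mul_lt_mul_of_pos_left hcore (by positivity)
    _ = Real.sqrt π * ((1/2) * (2 * (Real.sqrt q * Real.sqrt w))^n) := by
        rw [mul_pow, mul_pow, hexp2, hexpw]; ring
    _ = Real.sqrt π * ((1/2) * Real.sqrt (3*N*(N+3)/4) ^ n) := by rw [hsM]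
    _ ≤ Real.sqrt π * ((1/2) * Real.sqrt (x - 1/2) ^ n) := by
        apply mul_le_mul_of_nonneg_left _ (Real.sqrt_nonneg π)
        apply mul_le_mul_of_nonneg_left _ (by norm_num)
        exact pow_le_pow_left₀ (Real.sqrt_nonneg _) hsx n
    _ ≤ Real.sqrt π * Uq n m := by
        apply mul_le_mul_of_nonneg_left hU_lb (Real.sqrt_nonneg π)

lemma key2_27 : (32:ℝ) < Real.sqrt π * Uq 3 27 := by
  have hΓh : (0:ℝ) < Gamma (29/2:ℝ) := Gamma_pos_of_pos (by norm_num)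
  have hlo := half_lo' (x := (29/2:ℝ)) (by norm_num)
  rw [show (29/2:ℝ) + 1/2 = 15 by norm_num, show (29/2:ℝ) - 1/2 = 14 by norm_num] at hlo
  have s14 : (3.7:ℝ) ≤ Real.sqrt 14 := by
    rw [Real.le_sqrt (by norm_num) (by norm_num)]; norm_num
  have hG15 : Gamma (15:ℝ) = ((14:ℕ).factorial : ℝ) := by
    rw [show (15:ℝ) = ((14:ℕ):ℝ) + 1 by norm_num, Real.Gamma_nat_eq_factorial]
  rw [hG15] at hlo
  have hf14 : (((14:ℕ).factorial : ℕ) : ℝ) = 87178291200 := by norm_num [Nat.factorial]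
  have hf15 : (((15:ℕ).factorial : ℕ) : ℝ) = 1307674368000 := by norm_num [Nat.factorial]
  rw [hf14] at hlo
  have hU : (13.5:ℝ) * Real.sqrt 14 ≤ Uq 3 27 := by
    unfold Uq
    norm_num
    rw [le_div_iff₀ (by positivity)]
    nlinarith [hlo, Real.sqrt_nonneg (14:ℝ), hΓh]
  have hU2 : (49.95:ℝ) ≤ Uq 3 27 := by nlinarith [hU, s14]
  have := mul_le_mul sqrt_pi_gt hU2 (by norm_num) (Real.sqrt_nonneg π)
  nlinarith [this]

lemma key2_117 : (32:ℝ) < Real.sqrt π * Uq 3 117 := by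
  have hΓh : (0:ℝ) < Gamma (119/2:ℝ) := Gamma_pos_of_pos (by norm_num)
  have hlo := half_lo' (x := (119/2:ℝ)) (by norm_num)
  rw [show (119/2:ℝ) + 1/2 = 60 by norm_num, show (119/2:ℝ) - 1/2 = 59 by norm_num] at hlo
  have s59 : (7.6:ℝ) ≤ Real.sqrt 59 := by
    rw [Real.le_sqrt (by norm_num) (by norm_num)]; norm_num
  have hG60 : Gamma (60:ℝ) = ((59:ℕ).factorial : ℝ) := by
    rw [show (60:ℝ) = ((59:ℕ):ℝ) + 1 by norm_num, Real.Gamma_nat_eq_factorial]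
  rw [hG60] at hlo
  have hU : (58.5:ℝ) * Real.sqrt 59 ≤ Uq 3 117 := by
    unfold Uq
    norm_num
    rw [le_div_iff₀ (by positivity)]
    have hq : ((60:ℕ).factorial : ℝ) = 60 * ((59:ℕ).factorial : ℝ) := by
      rw [show (60:ℕ) = 59 + 1 from rfl, Nat.factorial_succ]; push_cast; ring
    rw [← show (117:ℝ) * ((60:ℕ).factorial : ℝ) = 973555492190742646880331918437133632548238194944265776436565490479923200000000000000 by norm_num [Nat.factorial], hq]
    nlinarith [hlo, Real.sqrt_nonneg (59:ℝ), hΓh, (show (0:ℝ) < ((59:ℕ).factorial : ℝ) by exact_mod_cast Nat.factorial_pos 59)]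
  have hU2 : (444.6:ℝ) ≤ Uq 3 117 := by nlinarith [hU, s59]
  have := mul_le_mul sqrt_pi_gt hU2 (by norm_num) (Real.sqrt_nonneg π)
  nlinarith [this]

lemma ms_gt {n m : ℕ} (hn : 3 ≤ n) (hm1 : 1 ≤ m)
    (hub : 2*m ≤ 3*n^3 + 14*n^2 + 9*n) : MS n > Cnm n m := by
  set N := (n:ℝ) with hNdef
  have hN3 : (3:ℝ) ≤ N := by rw [hNdef]; exact_mod_cast hn
  have hmR : (1:ℝ) ≤ m := by exact_mod_cast hm1
  have hNm : (0:ℝ) < N + m := by linarith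
  have hv : (0:ℝ) < ballVol n ^ ((1:ℝ)/n) :=
    Real.rpow_pos_of_pos (ballVol_pos n) _
  have h4 : (4:ℝ) ≤ 4^(n+1) := by
    calc (4:ℝ) = 4^1 := (pow_one 4).symm
      _ ≤ 4^(n+1) := pow_le_pow_right₀ (by norm_num) (by omega)
  unfold MS Cnm
  apply max_lt
  · -- branch A
    have hUq : (0:ℝ) < Uq n m := Uq_pos (by omega) hm1
    set K : ℝ := N * 4^(n+1) with hKdef
    have hK : (0:ℝ) < K := by rw [hKdef]; positivity
    have hTv : (m : ℝ) * ballVol m / ((N + m) * ballVol (n + m)) * ballVol n < K^n := by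
      rw [T_eq n m (by omega) hm1, ← hNdef]
      have hbv : ballVol n = π^(N/2) / Gamma (N/2 + 1) := by
        unfold ballVol; rw [← hNdef]
      rw [hbv]
      have hpm : π^(-(N)/2) * π^(N/2) = 1 := by
        rw [← Real.rpow_add pi_pos, show -(N)/2 + N/2 = (0:ℝ) by ring, Real.rpow_zero]
      have hΓ1 : (1:ℝ) ≤ Gamma (N/2 + 1) := by
        have := one_le_Gamma_half (n := n) (by omega)
        rw [← hNdef] at this; exact this
      have hstep1 : π^(-(N)/2) * Uq n m * (π^(N/2) / Gamma (N/2 + 1))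
          = Uq n m / Gamma (N/2+1) := by
        field_simp
        simp only [neg_div] at hpm ⊢; nlinarith [hpm, hUq]
      rw [hstep1]
      have h1 : Uq n m / Gamma (N/2+1) ≤ Uq n m := div_le_self hUq.le hΓ1
      -- Uq < sqrt(N+m)^n
      set x : ℝ := (m:ℝ)/2 + 1 with hxdef
      have hx0 : (0:ℝ) < x := by rw [hxdef]; positivity
      have hsu := steps_up' hx0 n
      rw [show x + (n:ℝ)/2 = (N + (m:ℝ))/2 + 1 by rw [hxdef, hNdef]; ring] at hsu
      have hΓx : (0:ℝ) < Gamma x := Gamma_pos_of_pos hx0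
      have hmlt : (m:ℝ)/(N + m) < 1 := by
        rw [div_lt_one hNm]; linarith
      have hsq1 : Real.sqrt ((N + (m:ℝ))/2 + 1) ≤ Real.sqrt (N + m) := by
        apply Real.sqrt_le_sqrt; linarith
      have hU2 : Uq n m ≤ ((m:ℝ)/(N+m)) * Real.sqrt (N + m) ^ n := by
        have hdiv : Gamma ((N + (m:ℝ))/2 + 1) / Gamma x ≤ Real.sqrt (N + m) ^ n := by
          rw [div_le_iff₀ hΓx]
          calc Gamma ((N + (m:ℝ))/2 + 1) ≤ Gamma x * Real.sqrt ((N + (m:ℝ))/2 + 1) ^ n := hsu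
            _ ≤ Gamma x * Real.sqrt (N+m) ^ n := by
                apply mul_le_mul_of_nonneg_left (pow_le_pow_left₀ (Real.sqrt_nonneg _) hsq1 n) hΓx.le
            _ = Real.sqrt (N+m) ^ n * Gamma x := mul_comm _ _
        calc Uq n m = ((m:ℝ)/(N+m)) * (Gamma ((N + (m:ℝ))/2 + 1) / Gamma x) := by
              unfold Uq; rw [← hNdef, div_mul_div_comm, hxdef]
          _ ≤ ((m:ℝ)/(N+m)) * Real.sqrt (N + m) ^ n := by
              apply mul_le_mul_of_nonneg_left hdiv (by positivity)
      have hsqKn : Real.sqrt (N + m) ^ n < K ^ n := by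
        apply pow_lt_pow_left₀ _ (Real.sqrt_nonneg _) (by omega)
        rw [Real.sqrt_lt' hK]
        have hKsq : K^2 = N^2 * 16^(n+1) := by
          rw [hKdef, mul_pow, ← pow_mul, show (n+1)*2 = 2*(n+1) by ring, pow_mul]
          norm_num
        rw [hKsq]
        have hubR : 2*(m:ℝ) ≤ 3*N^3 + 14*N^2 + 9*N := by
          rw [hNdef]; exact_mod_cast hub
        have h2n : (n:ℝ) < 2^n := by exact_mod_cast (Nat.lt_two_pow_self (n := n))
        have h216 : (2:ℝ)^n ≤ 16^n := pow_le_pow_left₀ (by norm_num) (by norm_num) n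
        have h16 : (16:ℝ)^(n+1) = 16 * 16^n := by rw [pow_succ]; ring
        nlinarith [sq_nonneg N, pow_pos (show (0:ℝ) < 16 by norm_num) n]
      calc Uq n m / Gamma (N/2+1) ≤ Uq n m := h1
        _ ≤ ((m:ℝ)/(N+m)) * Real.sqrt (N + m) ^ n := hU2
        _ < 1 * Real.sqrt (N + m) ^ n := by
            apply mul_lt_mul_of_pos_right hmlt (by
              have : (0:ℝ) < Real.sqrt (N+m) := Real.sqrt_pos.mpr hNm
              positivity)
        _ = Real.sqrt (N + m) ^ n := one_mul _
        _ < K ^ n := hsqKn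
    -- conclude branch A
    have hT0 : (0:ℝ) ≤ (m : ℝ) * ballVol m / ((N + m) * ballVol (n + m)) := by
      have h1 := ballVol_pos m
      have h2 := ballVol_pos (n+m)
      positivity
    have hinv : (0:ℝ) < (1:ℝ)/(n:ℝ) := by
      have : (0:ℝ) < (n:ℝ) := by linarith
      positivity
    have hr := Real.rpow_lt_rpow (mul_nonneg hT0 (ballVol_pos n).le) hTv hinv
    rw [Real.mul_rpow hT0 (ballVol_pos n).le] at hr
    have hKr : (K^n) ^ ((1:ℝ)/n) = K := by
      rw [← Real.rpow_natCast K n, ← Real.rpow_mul hK.le, mul_one_div,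
        div_self (show (n:ℝ) ≠ 0 by rw [← hNdef] at *; linarith), Real.rpow_one]
    rw [hKr] at hr
    -- hr : T^{1/n} * v < K
    have hfin : ((m : ℝ) * ballVol m / ((N + m) * ballVol (n + m))) ^ ((1:ℝ)/n)
        < K / ballVol n ^ ((1:ℝ)/n) := (lt_div_iff₀ hv).mpr hr
    calc 1/(n:ℝ) * ((m : ℝ) * ballVol m / ((N + m) * ballVol (n + m))) ^ ((1:ℝ)/n)
        < 1/(n:ℝ) * (K / ballVol n ^ ((1:ℝ)/n)) := by
          apply mul_lt_mul_of_pos_left hfin hinv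
      _ = 4^(n+1) / ballVol n ^ ((1:ℝ)/n) := by
          rw [hKdef, hNdef]
          field_simp
  · -- branch B
    rw [div_lt_div_iff₀ (by positivity) hv]
    have hN3' : (3:ℝ) ≤ (n:ℝ) := hN3
    have key : (4:ℝ) * (3 * (ballVol n ^ ((1:ℝ)/n))) ≤ 4^(n+1) * ((n:ℝ) * ballVol n ^ ((1:ℝ)/n)) := by
      apply mul_le_mul h4 (mul_le_mul hN3' le_rfl hv.le (by linarith)) (by positivity) (by positivity)
    linarith [hv]

lemma s_gt_at {n : ℕ} (hn : 3 ≤ n) : S2 n > AT2 n := by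
  set N := (n:ℝ) with hNdef
  have hN3 : (3:ℝ) ≤ N := by rw [hNdef]; exact_mod_cast hn
  have ht : (0:ℝ) < N * (N - 2) := by nlinarith
  have hg : (0:ℝ) < (Gamma N / Gamma (N/2)) ^ ((1:ℝ)/n) := by
    apply Real.rpow_pos_of_pos
    exact div_pos (Gamma_pos_of_pos (by linarith)) (Gamma_pos_of_pos (by linarith))
  have hp : (0:ℝ) < π ^ (-(1:ℝ)/2) := Real.rpow_pos_of_pos pi_pos _
  have hc : (N * (N - 2)) ^ (-(1:ℝ)/2) < (N - 1) / (N * (N - 2)) := by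
    rw [show (-(1:ℝ)/2) = -(1/2) by norm_num, Real.rpow_neg ht.le, ← Real.sqrt_eq_rpow]
    have hst : (0:ℝ) < Real.sqrt (N * (N-2)) := Real.sqrt_pos.mpr ht
    have hlt : Real.sqrt (N * (N-2)) < N - 1 := by
      rw [Real.sqrt_lt' (by linarith : (0:ℝ) < N - 1)]
      nlinarith
    have h2 : (Real.sqrt (N * (N-2)))⁻¹ = Real.sqrt (N * (N-2)) / (N * (N-2)) := by
      rw [eq_div_iff ht.ne']
      nth_rewrite 2 [← Real.mul_self_sqrt ht.le]
      rw [← mul_assoc, inv_mul_cancel₀ hst.ne', one_mul]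
    rw [h2]
    gcongr
  unfold S2 AT2
  rw [← hNdef]
  calc π ^ (-(1:ℝ)/2) * ((N * (N-2)) ^ (-(1:ℝ)/2)) * (Gamma N / Gamma (N/2)) ^ ((1:ℝ)/n)
      < π ^ (-(1:ℝ)/2) * ((N - 1) / (N * (N - 2))) * (Gamma N / Gamma (N/2)) ^ ((1:ℝ)/n) := by
        apply mul_lt_mul_of_pos_right _ hg
        apply mul_lt_mul_of_pos_left hc hp
    _ = π ^ (-(1:ℝ)/2) * (N - 1) / (N * (N - 2)) * (Gamma N / Gamma (N/2)) ^ ((1:ℝ)/n) := by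
        rw [mul_div_assoc]


theorem stmt_12 (n mn : ℕ) (hn : 3 ≤ n)
    (hmn : 2 * mn = 3 * n * (n + 3) ∨ 2 * mn = n * (3 * n ^ 2 + 14 * n + 9)) :
    MS n > Cnm n mn ∧ Cnm n mn > S2 n ∧ S2 n > AT2 n := by
  have hm1 : 1 ≤ mn := by rcases hmn with h | h <;> nlinarith
  have hub : 2 * mn ≤ 3*n^3 + 14*n^2 + 9*n := by rcases hmn with h | h <;> nlinarith
  have hlb : 3*n*(n+3) ≤ 2*mn := by rcases hmn with h | h <;> nlinarith
  refine ⟨ms_gt hn hm1 hub, ?_, s_gt_at hn⟩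
  apply c_gt_s_of_key hn hm1
  rcases Nat.lt_or_ge n 4 with h4 | h4
  · have h3 : n = 3 := by omega
    subst h3
    have hm : mn = 27 ∨ mn = 117 := by rcases hmn with h | h <;> omega
    rw [show ((((3:ℕ)):ℝ) + 1)/2 = 2 by norm_num, Real.Gamma_two]
    norm_num
    rcases hm with h | h <;> subst h
    · exact key2_27
    · exact key2_117
  · exact key2_general h4 hlb
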